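/- For μ₁, μ₂ ∈ {+1, -1} and the phase Φ_{μ₁μ₂}(ξ₁,ξ₂) = -Λ(ξ₁+ξ₂) + μ₁Λ(ξ₁) + μ₂Λ(ξ₂) with Λ(ξ)=√(1+ξ²), the phase never vanishes: for all ξ₁, ξ₂ ∈ ℝ, Φ_{μ₁μ₂}(ξ₁,ξ₂) ≠ 0. -/
import Mathlib


/-- Λ(ξ) = √(1+ξ²) -/
noncomputable def Lam (ξ : ℝ) : ℝ := Real.sqrt (1 + ξ ^ 2)

lemma lam_sq (ξ : ℝ) : Lam ξ ^ 2 = 1 + ξ ^ 2 := by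
  unfold Lam
  rw [Real.sq_sqrt] ; positivity

lemma lam_one_le (ξ : ℝ) : 1 ≤ Lam ξ := by
  have h := Real.sq_sqrt (show (0:ℝ) ≤ 1 + ξ ^ 2 by positivity)
  have h2 := Real.sqrt_nonneg (1 + ξ ^ 2)
  unfold Lam
  nlinarith [sq_nonneg ξ]

lemma lam_neg (ξ : ℝ) : Lam (-ξ) = Lam ξ := by
  unfold Lam; ring_nf

lemma lam_add_lt (a b : ℝ) : Lam (a + b) < Lam a + Lam b := by
  have hx := lam_sq a
  have hy := lam_sq b
  have hz := lam_sq (a + b)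
  have hx1 := lam_one_le a
  have hy1 := lam_one_le b
  have hz1 := lam_one_le (a + b)
  by_contra hcon
  push_neg at hcon
  have hxy : (Lam a * Lam b) ^ 2 = (1 + a ^ 2) * (1 + b ^ 2) := by
    rw [mul_pow, hx, hy]
  have hpos : 0 < Lam a * Lam b :=
    mul_pos (lt_of_lt_of_le one_pos hx1) (lt_of_lt_of_le one_pos hy1)
  have h2 : (Lam a + Lam b) ^ 2 ≤ Lam (a + b) ^ 2 := by nlinarith
  have hle : Lam a * Lam b ≤ a * b - 1 / 2 := by nlinarith
  nlinarith [sq_nonneg (Lam a * Lam b - a * b), mul_nonneg hpos.le (sub_nonneg.2 hle)]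

/-- The quadratic phase Φ_{μ₁μ₂}(ξ₁,ξ₂) = -Λ(ξ₁+ξ₂) + μ₁Λ(ξ₁) + μ₂Λ(ξ₂) never vanishes. -/
theorem two_phase_ne_zero (μ₁ μ₂ : ℝ) (hμ₁ : μ₁ = 1 ∨ μ₁ = -1) (hμ₂ : μ₂ = 1 ∨ μ₂ = -1)
    (ξ₁ ξ₂ : ℝ) :
    -Lam (ξ₁ + ξ₂) + μ₁ * Lam ξ₁ + μ₂ * Lam ξ₂ ≠ 0 := by
  have h1 := lam_one_le ξ₁
  have h2 := lam_one_le ξ₂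
  have h3 := lam_one_le (ξ₁ + ξ₂)
  rcases hμ₁ with rfl | rfl <;> rcases hμ₂ with rfl | rfl
  · have := lam_add_lt ξ₁ ξ₂
    intro h; linarith
  · -- Λ(ξ₁+ξ₂) ≠ Λξ₁ - Λξ₂ : from Λξ₁ < Λ(ξ₁+ξ₂) + Λξ₂
    have h := lam_add_lt (ξ₁ + ξ₂) (-ξ₂)
    rw [lam_neg] at h
    simp only [add_neg_cancel_right] at h
    intro h'; linarith
  · have h := lam_add_lt (ξ₁ + ξ₂) (-ξ₁)
    rw [lam_neg] at h
    have e : ξ₁ + ξ₂ + -ξ₁ = ξ₂ := by ring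
    rw [e] at h
    intro h'; linarith
  · intro h; linarith
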